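/- In the setting of the rank-two algebra A = O·1 ⊕ μ·X over a Dedekind domain O with μ² = (z) and X² = z⁻¹ā X + z⁻¹b̄, the kernel of the multiplication map m : A ⊗_O A → A is isomorphic as an O-module to A ⊗_O μ, via the map sending a ⊗ u to the action of left multiplication by a on X_u = uX ⊗ 1 − 1 ⊗ uX. -/

import Mathlib

/-- The element of `K⁴` (coordinates `1⊗1, 1⊗X, X⊗1, X⊗X`) representing `p ⊗ q`. -/
def tens {K : Type*} [Field K] (p q : K × K) : Fin 4 → K :=
  ![p.1 * q.1, p.1 * q.2, p.2 * q.1, p.2 * q.2]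

/-- The multiplication map `m : K² ⊗ K² → K²` for `X² = aX + b`, in coordinates. -/
noncomputable def mulMap {K : Type*} [Field K] (a b : K) : (Fin 4 → K) →ₗ[K] K × K :=
  LinearMap.prod
    ((LinearMap.proj (0 : Fin 4) : (Fin 4 → K) →ₗ[K] K) +
      b • (LinearMap.proj (3 : Fin 4) : (Fin 4 → K) →ₗ[K] K))
    ((LinearMap.proj (1 : Fin 4) : (Fin 4 → K) →ₗ[K] K) +
      (LinearMap.proj (2 : Fin 4) : (Fin 4 → K) →ₗ[K] K) +
      a • (LinearMap.proj (3 : Fin 4) : (Fin 4 → K) →ₗ[K] K))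

/-- `X_v = vX ⊗ 1 − 1 ⊗ vX` in coordinates. -/
def Xel {K : Type*} [Field K] (v : K) : Fin 4 → K := ![0, -v, v, 0]

/-- Left multiplication `ℓ_x` by `x = x₁·1 + x₂·X` on the first tensor factor,
in the coordinates `1⊗1, 1⊗X, X⊗1, X⊗X`, for `X² = aX + b`. -/
def ellOp {K : Type*} [Field K] (a b : K) (x : K × K) (c : Fin 4 → K) : Fin 4 → K :=
  ![x.1 * c 0 + b * (x.2 * c 2), x.1 * c 1 + b * (x.2 * c 3),
    x.2 * c 0 + x.1 * c 2 + a * (x.2 * c 2), x.2 * c 1 + x.1 * c 3 + a * (x.2 * c 3)]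

set_option maxHeartbeats 2000000 in
set_option synthInstance.maxHeartbeats 1000000 in
open TensorProduct in
/-- `ker(m) ≅ A ⊗_O μ` as `O`-modules, via `a ⊗ u ↦ ℓ_a(X_u)`, for the rank-two
algebra `A = O·1 ⊕ μ·X` with `μ² = (z)` and `X² = z⁻¹ā X + z⁻¹b̄`, `ā ∈ μ`, `b̄ ∈ O`;
`A ⊗ A` is realized as the span `AA` of the `tens p q` inside `K⁴` and `ker(m)` as
`AA ⊓ ker(mulMap)`. -/
theorem stmt8 (O : Type*) [CommRing O] [IsDomain O] [IsDedekindDomain O]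
    (K : Type*) [Field K] [Algebra O K] [IsFractionRing O K]
    (μ : Ideal O) (hμ : μ ≠ ⊥)
    (z : O) (hsq : μ * μ = Ideal.span {z})
    (abar bbar : O) (habar : abar ∈ μ) :
    let f : O → K := algebraMap O K
    let a : K := f abar / f z
    let b : K := f bbar / f z
    let O1 : Submodule O K := LinearMap.range (Algebra.linearMap O K)
    let μK : Submodule O K := Submodule.map (Algebra.linearMap O K) μ
    let A : Submodule O (K × K) := O1.prod μK
    let AA : Submodule O (Fin 4 → K) :=
      Submodule.span O {w | ∃ p ∈ A, ∃ q ∈ A, w = tens p q}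
    let Kerm : Submodule O (Fin 4 → K) :=
      AA ⊓ LinearMap.ker ((mulMap a b).restrictScalars O)
    ∃ e : (A ⊗[O] μ) ≃ₗ[O] Kerm,
      ∀ (x : A) (v : μ),
        (e (x ⊗ₜ v) : Fin 4 → K) = ellOp a b (x : K × K) (Xel (f v)) := by
  intro f a b O1 μK A AA Kerm
  have hfinj : Function.Injective f := IsFractionRing.injective O K
  have hz0 : z ≠ 0 := by
    rintro rfl
    rw [Ideal.span_singleton_eq_bot.mpr rfl] at hsq
    rcases Ideal.mul_eq_bot.mp hsq with h | h <;> exact hμ h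
  have hfz : f z ≠ 0 := fun h => hz0 (hfinj (h.trans (map_zero (algebraMap O K)).symm))
  -- extraction of z = ∑ cᵢ dᵢ
  have hzmem : z ∈ μ * μ := hsq ▸ Ideal.mem_span_singleton_self z
  obtain ⟨n, c, d, hc, hd, hzsum⟩ :
      ∃ (n : ℕ) (c : Fin n → O) (d : Fin n → O), (∀ i, c i ∈ μ) ∧ (∀ i, d i ∈ μ) ∧ z = ∑ i, c i * d i := by
    refine Submodule.mul_induction_on hzmem ?_ ?_
    · intro m hm p hp
      exact ⟨1, fun _ => m, fun _ => p, fun _ => hm, fun _ => hp, by simp⟩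
    · rintro x y ⟨n₁, c₁, d₁, hc₁, hd₁, rfl⟩ ⟨n₂, c₂, d₂, hc₂, hd₂, rfl⟩
      refine ⟨n₁ + n₂, Fin.append c₁ c₂, Fin.append d₁ d₂, ?_, ?_, ?_⟩
      · intro i
        refine Fin.addCases (fun j => ?_) (fun j => ?_) i <;>
          simp [Fin.append_left, Fin.append_right, hc₁, hc₂]
      · intro i
        refine Fin.addCases (fun j => ?_) (fun j => ?_) i <;>
          simp [Fin.append_left, Fin.append_right, hd₁, hd₂]
      · rw [Fin.sum_univ_add]
        simp [Fin.append_left, Fin.append_right]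
  -- the "dual basis" functions g i
  have gdef : ∀ (i : Fin n) (v : μ), ∃ t : O, z * t = d i * (v : O) := by
    intro i v
    have hmem : d i * (v : O) ∈ Ideal.span {z} := hsq ▸ Ideal.mul_mem_mul (hd i) v.2
    obtain ⟨t, ht⟩ := Ideal.mem_span_singleton'.mp hmem
    exact ⟨t, by rw [mul_comm]; exact ht⟩
  choose g hg using gdef
  have hzc : ∀ x y : O, z * x = z * y → x = y := fun x y h => mul_left_cancel₀ hz0 h
  let sec : μ →ₗ[O] (Fin n → O) :=
    { toFun := fun v i => g i v
      map_add' := by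
        intro v w; funext i
        show g i (v + w) = g i v + g i w
        apply hzc
        rw [mul_add, hg, hg, hg, Submodule.coe_add, mul_add]
      map_smul' := by
        intro r v; funext i
        show g i (r • v) = r * g i v
        apply hzc
        rw [mul_left_comm, hg, hg, Submodule.coe_smul, smul_eq_mul]; ring }
  let π : (Fin n → O) →ₗ[O] μ :=
    { toFun := fun e => ⟨∑ i, e i * c i, μ.sum_mem fun i _ => μ.mul_mem_left (e i) (hc i)⟩
      map_add' := by
        intro e e'; apply Subtype.ext
        simp [add_mul, Finset.sum_add_distrib]
      map_smul' := by
        intro r e; apply Subtype.ext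
        simp [Finset.mul_sum, mul_assoc] }
  have hsplit : π.comp sec = LinearMap.id := by
    ext v
    show (↑(π (sec v)) : O) = (v : O)
    apply hzc
    show z * (∑ i, g i v * c i) = z * (v : O)
    rw [Finset.mul_sum]
    calc ∑ i, z * (g i v * c i) = ∑ i, c i * (z * g i v) := by
          refine Finset.sum_congr rfl fun i _ => by ring
      _ = ∑ i, c i * (d i * (v : O)) := by
          refine Finset.sum_congr rfl fun i _ => by rw [hg]
      _ = (∑ i, c i * d i) * (v : O) := by
          rw [Finset.sum_mul]; exact Finset.sum_congr rfl fun i _ => by ring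
      _ = z * (v : O) := by rw [← hzsum]
  haveI hproj_mu : Module.Projective O μ := Module.Projective.of_split sec π hsplit
  -- equivalences and flatness of A
  let eO : O ≃ₗ[O] O1 := LinearEquiv.ofInjective (Algebra.linearMap O K)
    (by intro x y h; exact hfinj h)
  let eμ : μ ≃ₗ[O] μK := Submodule.equivMapOfInjective (Algebra.linearMap O K)
    (by intro x y h; exact hfinj h) μ
  let eA : (O1 × μK) ≃ₗ[O] A :=
    { toFun := fun p => ⟨((p.1 : K), (p.2 : K)), Submodule.mem_prod.mpr ⟨p.1.2, p.2.2⟩⟩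
      invFun := fun x => (⟨(x : K × K).1, (Submodule.mem_prod.mp x.2).1⟩,
        ⟨(x : K × K).2, (Submodule.mem_prod.mp x.2).2⟩)
      left_inv := fun p => rfl
      right_inv := fun x => rfl
      map_add' := fun p q => rfl
      map_smul' := fun r p => rfl }
  haveI : Module.Projective O O1 := Module.Projective.of_equiv eO
  haveI : Module.Projective O μK := Module.Projective.of_equiv eμ
  haveI : Module.Projective O A := Module.Projective.of_equiv eA
  haveI hflatA : Module.Flat O A := inferInstance

  -- basic membership helpers
  have hO1 : ∀ r : O, f r ∈ O1 := fun r => ⟨r, rfl⟩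
  have hμKm : ∀ u : O, u ∈ μ → f u ∈ μK := fun u hu => ⟨u, hu, rfl⟩
  have h10A : ((1, 0) : K × K) ∈ A :=
    Submodule.mem_prod.mpr ⟨⟨1, by simp⟩, Submodule.zero_mem _⟩
  have h0vA : ∀ v : μ, ((0, f v) : K × K) ∈ A := fun v =>
    Submodule.mem_prod.mpr ⟨Submodule.zero_mem _, ⟨(v : O), v.2, rfl⟩⟩
  have hAelem : ∀ x : A, ∃ r u : O, u ∈ μ ∧ (x : K × K) = (f r, f u) := by
    intro x
    obtain ⟨h1, h2⟩ := Submodule.mem_prod.mp x.2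
    obtain ⟨r, hr⟩ := h1
    obtain ⟨u, hu, hu'⟩ := h2
    exact ⟨r, u, hu, Prod.ext hr.symm hu'.symm⟩
  -- the bilinear map ψ
  let B : A →ₗ[O] μ →ₗ[O] (Fin 4 → K) := LinearMap.mk₂ O
    (fun x v => ellOp a b (x : K × K) (Xel (f v)))
    (by intro x y v; funext i; fin_cases i <;>
      simp [ellOp, Xel] <;> ring)
    (by intro r x v; funext i; fin_cases i <;>
      simp [ellOp, Xel, Algebra.smul_def] <;> ring)
    (by intro x v w; funext i; fin_cases i <;>
      simp [ellOp, Xel, f] <;> ring)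
    (by intro r x v; funext i; fin_cases i <;>
      simp [ellOp, Xel, Algebra.smul_def, f] <;> ring)
  let ψ : A ⊗[O] μ →ₗ[O] (Fin 4 → K) := TensorProduct.lift B
  have hψ : ∀ (x : A) (v : μ), ψ (x ⊗ₜ v) = ellOp a b (x : K × K) (Xel (f v)) :=
    fun x v => rfl
  -- ψ lands in Kerm
  have hmemK : ∀ ξ : A ⊗[O] μ, ψ ξ ∈ Kerm := by
    intro ξ
    induction ξ using TensorProduct.induction_on with
    | zero => rw [map_zero]; exact Submodule.zero_mem _
    | add x y hx hy => rw [map_add]; exact Submodule.add_mem _ hx hy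
    | tmul x v =>
      rw [hψ]
      obtain ⟨r, u, hu, hx⟩ := hAelem x
      have huv : u * (v : O) ∈ Ideal.span {z} := hsq ▸ Ideal.mul_mem_mul hu v.2
      obtain ⟨t, ht⟩ := Ideal.mem_span_singleton'.mp huv   -- t * z = u * v
      have hfufv : f u * f (v : O) = f z * f t := by
        have : f (u * (v : O)) = f (t * z) := by rw [← ht]
        simp only [f, map_mul] at this
        rw [this]; ring
      have hb : b * (f z * f t) = f (bbar * t) := by
        simp only [b, f, map_mul]
        field_simp
        have hz' : (algebraMap O K) z ≠ 0 := hfz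
        rw [mul_right_comm _ ((algebraMap O K) z), mul_div_cancel_right₀ _ hz']
      have ha : a * (f z * f t) = f (abar * t) := by
        simp only [a, f, map_mul]
        field_simp
        have hz' : (algebraMap O K) z ≠ 0 := hfz
        rw [mul_right_comm _ ((algebraMap O K) z), mul_div_cancel_right₀ _ hz']
      refine Submodule.mem_inf.mpr ⟨?_, ?_⟩
      · -- AA membership
        have hpA : ((f (bbar * t), f (r * (v : O) + abar * t)) : K × K) ∈ A :=
          Submodule.mem_prod.mpr ⟨hO1 _,
            hμKm _ (μ.add_mem (μ.mul_mem_left r v.2) (μ.mul_mem_right t habar))⟩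
        have heq : ellOp a b (x : K × K) (Xel (f (v : O))) =
            tens (f (bbar * t), f (r * (v : O) + abar * t)) (1, 0) -
              tens (f r, f u) (0, f (v : O)) := by
          rw [hx]
          funext i; fin_cases i
          · show f r * 0 + b * (f u * f (v:O)) = _
            simp [tens, ellOp, Xel, hfufv, hb]
          · simp [tens, ellOp, Xel]
          · show f u * 0 + f r * f (v:O) + a * (f u * f (v:O)) = _
            simp only [f] at hfufv ha ⊢
            simp [tens, ellOp, Xel, hfufv, ha, map_add, map_mul]
            all_goals ring
          · simp [tens, ellOp, Xel]
            all_goals ring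
        rw [heq]
        exact Submodule.sub_mem _
          (Submodule.subset_span ⟨_, hpA, _, h10A, rfl⟩)
          (Submodule.subset_span ⟨_, hx ▸ x.2, _, h0vA v, rfl⟩)
      · -- kernel membership
        rw [LinearMap.mem_ker, LinearMap.restrictScalars_apply]
        refine Prod.ext ?_ ?_ <;>
          simp [mulMap, ellOp, Xel] <;> ring

  -- injectivity of ψ
  let C : A →ₗ[O] μ →ₗ[O] A := LinearMap.mk₂ O (fun x v => (v : O) • x)
    (fun x y v => smul_add _ _ _)
    (fun r x v => smul_comm _ _ _)
    (fun x v w => by show ((v + w : μ) : O) • x = _; rw [Submodule.coe_add, add_smul])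
    (fun r x v => by show ((r • v : μ) : O) • x = _; rw [Submodule.coe_smul, smul_eq_mul, mul_smul])
  let χ : A ⊗[O] μ →ₗ[O] A := TensorProduct.lift C
  have hχ : ∀ (x : A) (v : μ), χ (x ⊗ₜ v) = (v : O) • x := fun x v => rfl
  have hχinj : Function.Injective χ := by
    have h1 : Function.Injective (LinearMap.lTensor A μ.subtype) :=
      Module.Flat.lTensor_preserves_injective_linearMap μ.subtype
        (Submodule.injective_subtype μ)
    have hcomp : χ = (TensorProduct.rid O A).toLinearMap ∘ₗ LinearMap.lTensor A μ.subtype := by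
      apply TensorProduct.ext'
      intro x v
      simp only [LinearMap.coe_comp, Function.comp_apply, LinearMap.lTensor_tmul,
        LinearEquiv.coe_coe, TensorProduct.rid_tmul, hχ]
      rfl
    rw [hcomp]
    exact (TensorProduct.rid O A).injective.comp h1
  let P1 : (Fin 4 → K) →ₗ[O] K :=
    ((LinearMap.proj (1 : Fin 4) : (Fin 4 → K) →ₗ[K] K).restrictScalars O)
  let P3 : (Fin 4 → K) →ₗ[O] K :=
    ((LinearMap.proj (3 : Fin 4) : (Fin 4 → K) →ₗ[K] K).restrictScalars O)
  let Φ : (Fin 4 → K) →ₗ[O] K × K := LinearMap.prod (-P1) (-P3)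
  have hΦψ : Φ ∘ₗ ψ = A.subtype ∘ₗ χ := by
    apply TensorProduct.ext'
    intro x v
    simp only [LinearMap.coe_comp, Function.comp_apply, hψ, hχ, Submodule.coe_subtype,
      Submodule.coe_smul]
    refine Prod.ext ?_ ?_ <;>
      simp [Φ, P1, P3, ellOp, Xel, Algebra.smul_def] <;> ring
  have hψinj : Function.Injective ψ := by
    have hker : ∀ ξ, ψ ξ = 0 → ξ = 0 := by
      intro ξ hξ
      have h2 : Φ (ψ ξ) = A.subtype (χ ξ) := by
        have := LinearMap.congr_fun hΦψ ξ
        simpa using this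
      rw [hξ, map_zero] at h2
      have hχ0 : χ ξ = 0 := Submodule.injective_subtype A (by rw [← h2]; rfl)
      exact hχinj (by rw [hχ0, map_zero])
    intro ξ η h
    have := hker (ξ - η) (by rw [map_sub, h, sub_self])
    exact sub_eq_zero.mp this

  -- surjectivity
  have hsurj : ∀ w : Fin 4 → K, w ∈ Kerm → ∃ ξ, ψ ξ = w := by
    intro w hw
    obtain ⟨hwAA, hwker⟩ := Submodule.mem_inf.mp hw
    have hker' : w 0 + b * w 3 = 0 ∧ w 1 + w 2 + a * w 3 = 0 := by
      have h0 := LinearMap.mem_ker.mp hwker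
      rw [LinearMap.restrictScalars_apply] at h0
      have h1 := congrArg Prod.fst h0
      have h2 := congrArg Prod.snd h0
      simp only [mulMap, LinearMap.prod_apply, LinearMap.add_apply, LinearMap.smul_apply,
        LinearMap.proj_apply, Pi.prod, smul_eq_mul, Prod.fst_zero, Prod.snd_zero] at h1 h2
      exact ⟨h1, h2⟩
    have hco : w 1 ∈ μK ∧ w 3 ∈ Submodule.map (Algebra.linearMap O K) (μ * μ) := by
      refine Submodule.span_induction ?_ ?_ ?_ ?_ hwAA
      · rintro w' ⟨p, hp, q, hq, rfl⟩
        obtain ⟨h1, h2⟩ := Submodule.mem_prod.mp hp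
        obtain ⟨h3, h4⟩ := Submodule.mem_prod.mp hq
        obtain ⟨r, hr⟩ := h1
        obtain ⟨u1, hu1, hu1'⟩ := h2
        obtain ⟨u2, hu2, hu2'⟩ := h4
        constructor
        · show p.1 * q.2 ∈ μK
          exact ⟨r * u2, μ.mul_mem_left r hu2, by rw [← hr, ← hu2']; exact map_mul (algebraMap O K) r u2⟩
        · show p.2 * q.2 ∈ _
          exact ⟨u1 * u2, Ideal.mul_mem_mul hu1 hu2, by rw [← hu1', ← hu2']; exact map_mul (algebraMap O K) u1 u2⟩
      · exact ⟨Submodule.zero_mem _, Submodule.zero_mem _⟩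
      · intro x y _ _ hx hy
        exact ⟨Submodule.add_mem _ hx.1 hy.1, Submodule.add_mem _ hx.2 hy.2⟩
      · intro r x _ hx
        exact ⟨Submodule.smul_mem _ _ hx.1, Submodule.smul_mem _ _ hx.2⟩
    obtain ⟨σ, hσμ, hσ⟩ : ∃ s, s ∈ μ ∧ f s = -(w 1) := by
      obtain ⟨u, hu, hu'⟩ := hco.1
      exact ⟨-u, μ.neg_mem hu, by have h' : f u = w 1 := hu'; rw [show f (-u) = -(f u) from map_neg _ u, h']⟩
    obtain ⟨m, hmμ, hm⟩ : ∃ m, m ∈ μ * μ ∧ f m = -(w 3) := by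
      obtain ⟨u, hu, hu'⟩ := hco.2
      exact ⟨-u, Submodule.neg_mem _ hu, by have h' : f u = w 3 := hu'; rw [show f (-u) = -(f u) from map_neg _ u, h']⟩
    have key : ∀ m' : O, m' ∈ μ * μ → ∃ ξ, ψ ξ = ![b * f m', 0, a * f m', -(f m')] := by
      intro m' hm'
      refine Submodule.mul_induction_on hm' ?_ ?_
      · intro u hu v hv
        refine ⟨(⟨(0, f u), Submodule.mem_prod.mpr ⟨Submodule.zero_mem _, hμKm u hu⟩⟩ : A)
          ⊗ₜ ⟨v, hv⟩, ?_⟩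
        rw [hψ]
        funext i; fin_cases i <;>
          simp [ellOp, Xel, f, map_mul] <;> all_goals ring
      · rintro m₁ m₂ ⟨ξ₁, h₁⟩ ⟨ξ₂, h₂⟩
        refine ⟨ξ₁ + ξ₂, ?_⟩
        rw [map_add, h₁, h₂]
        funext i; fin_cases i <;>
          simp [f, map_add] <;> all_goals ring
    obtain ⟨ξm, hξm⟩ := key m hmμ
    have e1 : ψ ((⟨(1, 0), h10A⟩ : A) ⊗ₜ ⟨σ, hσμ⟩) = ![0, -(f σ), f σ, 0] := by
      rw [hψ]
      funext j; fin_cases j <;> simp [ellOp, Xel]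
    refine ⟨(⟨(1, 0), h10A⟩ : A) ⊗ₜ ⟨σ, hσμ⟩ + ξm, ?_⟩
    rw [map_add, e1, hξm]
    funext i
    fin_cases i <;> simp
    · rw [hm]; linear_combination -hker'.1
    · rw [hσ, neg_neg]
    · rw [hσ, hm]; linear_combination -hker'.2
    · rw [hm, neg_neg]
  -- assembly
  let e0 : A ⊗[O] μ →ₗ[O] Kerm := ψ.codRestrict Kerm hmemK
  have hbij : Function.Bijective e0 := by
    constructor
    · intro ξ η h
      exact hψinj (congrArg Subtype.val h)
    · rintro ⟨w, hw⟩
      obtain ⟨ξ, hξ⟩ := hsurj w hw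
      exact ⟨ξ, Subtype.ext hξ⟩
  refine ⟨LinearEquiv.ofBijective e0 hbij, ?_⟩
  intro x v
  exact hψ x v
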